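/- arXiv:1204.2777 — 2 statements merged into one kernel-verified Lean document; each statement's English description precedes it below -/
import Mathlib

section
/- The vector fields X = ∂₁ − λu₁∂₃ and Y = ∂₂ + (λ²u₁ − λu₂)∂₃ commute for all values of the parameter λ if and only if u satisfies u₁₁ + u₁u₂₃ − u₂u₁₃ = 0. -/
/-- Partial derivative in the `i`-th coordinate direction. -/
noncomputable def pd (i : Fin 3) (f : (Fin 3 → ℝ) → ℝ) (x : Fin 3 → ℝ) : ℝ :=
  fderiv ℝ f x (Pi.single i 1)

/-- Lie bracket of vector fields on `ℝ³`, given by their coefficient functions. -/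
noncomputable def lieBracket (X Y : (Fin 3 → ℝ) → Fin 3 → ℝ)
    (x : Fin 3 → ℝ) (i : Fin 3) : ℝ :=
  ∑ j : Fin 3, (X x j * pd j (fun y => Y y i) x - Y x j * pd j (fun y => X y i) x)

lemma pd_const (j : Fin 3) (c : ℝ) (x : Fin 3 → ℝ) : pd j (fun _ => c) x = 0 := by
  simp [pd]

lemma pd_diff {u : (Fin 3 → ℝ) → ℝ} (hu : ContDiff ℝ 2 u) (i : Fin 3) :
    Differentiable ℝ (pd i u) := by
  have h : Differentiable ℝ (fderiv ℝ u) :=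
    (hu.fderiv_right (m := 1) (by norm_num)).differentiable one_ne_zero
  exact h.clm_apply (differentiable_const _)

lemma pd_symm {u : (Fin 3 → ℝ) → ℝ} (hu : ContDiff ℝ 2 u) (i j : Fin 3) (x : Fin 3 → ℝ) :
    pd i (pd j u) x = pd j (pd i u) x := by
  have h : Differentiable ℝ (fderiv ℝ u) :=
    (hu.fderiv_right (m := 1) (by norm_num)).differentiable one_ne_zero
  have hs : IsSymmSndFDerivAt ℝ u x := (hu.contDiffAt).isSymmSndFDerivAt (by norm_num)
  unfold pd
  rw [fderiv_clm_apply (h x) (differentiableAt_const _),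
      fderiv_clm_apply (h x) (differentiableAt_const _)]
  simpa using hs.eq (Pi.single i 1) (Pi.single j 1)

lemma pd_comb {f g : (Fin 3 → ℝ) → ℝ} (hf : Differentiable ℝ f) (hg : Differentiable ℝ g)
    (a b : ℝ) (j : Fin 3) (x : Fin 3 → ℝ) :
    pd j (fun y => a * f y + b * g y) x = a * pd j f x + b * pd j g x := by
  unfold pd
  rw [fderiv_fun_add ((hf x).const_mul a) ((hg x).const_mul b),
      fderiv_const_mul (hf x), fderiv_const_mul (hg x)]
  simp

lemma pd_neg_mul {f : (Fin 3 → ℝ) → ℝ} (hf : Differentiable ℝ f)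
    (a : ℝ) (j : Fin 3) (x : Fin 3 → ℝ) :
    pd j (fun y => -(a * f y)) x = -(a * pd j f x) := by
  unfold pd
  rw [fderiv_fun_neg, fderiv_const_mul (hf x)]
  simp

lemma key (u : (Fin 3 → ℝ) → ℝ) (hu : ContDiff ℝ 2 u) (l : ℝ) (x : Fin 3 → ℝ) :
    lieBracket
        (fun x => ![1, 0, -(l * pd 0 u x)])
        (fun x => ![0, 1, l ^ 2 * pd 0 u x - l * pd 1 u x])
        x 2
    = l ^ 2 * (pd 0 (pd 0 u) x + pd 0 u x * pd 1 (pd 2 u) x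
        - pd 1 u x * pd 0 (pd 2 u) x) := by
  have h0 := pd_diff hu 0
  have h1 := pd_diff hu 1
  have hc : ∀ j x, pd j (fun y => l ^ 2 * pd 0 u y - l * pd 1 u y) x
      = l ^ 2 * pd j (pd 0 u) x - l * pd j (pd 1 u) x := by
    intro j x
    have := pd_comb h0 h1 (l ^ 2) (-l) j x
    simp only [neg_mul] at this ⊢
    rw [show (fun y => l ^ 2 * pd 0 u y - l * pd 1 u y)
        = fun y => l ^ 2 * pd 0 u y + -(l * pd 1 u y) by funext y; ring]
    rw [this]; ring
  have hn : ∀ j x, pd j (fun y => -(l * pd 0 u y)) x = -(l * pd j (pd 0 u) x) :=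
    fun j x => pd_neg_mul h0 l j x
  simp only [lieBracket, Fin.sum_univ_three, Matrix.cons_val_zero, Matrix.cons_val_one,
    Matrix.head_cons, Matrix.cons_val_two, Matrix.tail_cons, hc, hn, pd_const]
  rw [pd_symm hu 2 0 x, pd_symm hu 2 1 x, pd_symm hu 1 0 x]
  ring

/-- The vector fields `X = ∂₁ − λu₁∂₃` and `Y = ∂₂ + (λ²u₁ − λu₂)∂₃` commute for
all values of `λ` iff `u` satisfies `u₁₁ + u₁u₂₃ − u₂u₁₃ = 0`. -/
theorem lax_pair_11_112
    (u : (Fin 3 → ℝ) → ℝ) (hu : ContDiff ℝ 2 u) :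
    (∀ l : ℝ, ∀ x, ∀ i : Fin 3,
      lieBracket
        (fun x => ![1, 0, -(l * pd 0 u x)])
        (fun x => ![0, 1, l ^ 2 * pd 0 u x - l * pd 1 u x])
        x i = 0) ↔
    (∀ x, pd 0 (pd 0 u) x + pd 0 u x * pd 1 (pd 2 u) x
        - pd 1 u x * pd 0 (pd 2 u) x = 0) := by
  constructor
  · intro H x
    have h := H 1 x 2
    rw [key u hu 1 x] at h
    linarith
  · intro H l x i
    fin_cases i
    · simp [lieBracket, Fin.sum_univ_three, pd_const]
    · simp [lieBracket, Fin.sum_univ_three, pd_const]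
    · rw [show (⟨2, by norm_num⟩ : Fin 3) = 2 from rfl, key u hu l x, H x, mul_zero]
end

section
/- If u, v are C² functions related by (λ−1)v₂ − u₂v₃ = 0 and λv₁ − u₁v₃ = 0 for a constant λ ∉ {0,1}, with v₃ nonvanishing, then cross-differentiation (v₁₂ = v₂₁) implies that u satisfies u₁₂ + u₂u₁₃ − u₁u₂₃ = 0 wherever v₃ ≠ 0. -/
lemma pd_hasFDerivAt {f : (Fin 3 → ℝ) → ℝ} (hf : ContDiff ℝ 2 f) (i : Fin 3)
    (x : Fin 3 → ℝ) :
    HasFDerivAt (pd i f)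
      ((ContinuousLinearMap.apply ℝ ℝ (Pi.single i 1 : Fin 3 → ℝ)).comp
        (fderiv ℝ (fderiv ℝ f) x)) x := by
  have h1 : ContDiff ℝ 1 (fderiv ℝ f) := hf.fderiv_right (by norm_num)
  have h2 : HasFDerivAt (fderiv ℝ f) (fderiv ℝ (fderiv ℝ f) x) x :=
    (h1.differentiable (by norm_num) x).hasFDerivAt
  exact ((ContinuousLinearMap.apply ℝ ℝ (Pi.single i 1)).hasFDerivAt).comp x h2

lemma pd_pd {f : (Fin 3 → ℝ) → ℝ} (hf : ContDiff ℝ 2 f) (i j : Fin 3)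
    (x : Fin 3 → ℝ) :
    pd j (pd i f) x
      = fderiv ℝ (fderiv ℝ f) x (Pi.single j 1) (Pi.single i 1) := by
  have := (pd_hasFDerivAt hf i x).fderiv
  simp only [pd, this]
  rfl

lemma sderiv_symm {f : (Fin 3 → ℝ) → ℝ} (hf : ContDiff ℝ 2 f)
    (x : Fin 3 → ℝ) (a b : Fin 3 → ℝ) :
    fderiv ℝ (fderiv ℝ f) x a b = fderiv ℝ (fderiv ℝ f) x b a := by
  have hder : ∀ y, HasFDerivAt f (fderiv ℝ f y) y := fun y =>
    (hf.differentiable (by norm_num) y).hasFDerivAt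
  have h1 : ContDiff ℝ 1 (fderiv ℝ f) := hf.fderiv_right (by norm_num)
  have h2 : HasFDerivAt (fderiv ℝ f) (fderiv ℝ (fderiv ℝ f) x) x :=
    (h1.differentiable (by norm_num) x).hasFDerivAt
  exact second_derivative_symmetric hder h2 a b

/-- Bäcklund transformation between Segre types `[(11)(22)]` and
`[(11)(11)(11)]`: if C² functions `u, v` satisfy `(λ−1)v₂ − u₂v₃ = 0` and
`λv₁ − u₁v₃ = 0` for a constant `λ ∉ {0,1}` with `v₃` nonvanishing, then
cross-differentiation (`v₁₂ = v₂₁`) implies `u₁₂ + u₂u₁₃ − u₁u₂₃ = 0`. -/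
theorem backlund_11_22
    (l : ℝ) (hl0 : l ≠ 0) (hl1 : l ≠ 1)
    (u v : (Fin 3 → ℝ) → ℝ)
    (hu : ContDiff ℝ 2 u) (hv : ContDiff ℝ 2 v)
    (hv3 : ∀ x, pd 2 v x ≠ 0)
    (h1 : ∀ x, (l - 1) * pd 1 v x - pd 1 u x * pd 2 v x = 0)
    (h2 : ∀ x, l * pd 0 v x - pd 0 u x * pd 2 v x = 0)
    (hmix : ∀ x, pd 0 (pd 1 v) x = pd 1 (pd 0 v) x) :
    ∀ x, pd 0 (pd 1 u) x + pd 1 u x * pd 0 (pd 2 u) x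
        - pd 0 u x * pd 1 (pd 2 u) x = 0 := by
  intro x
  set U := fderiv ℝ (fderiv ℝ u) x with hU
  set V := fderiv ℝ (fderiv ℝ v) x with hV
  -- derivative of the identity h1 in an arbitrary direction w
  have key : ∀ (i₁ i₂ : Fin 3) (c : ℝ),
      (∀ y, c * pd i₁ v y - pd i₂ u y - 0 = 0) → True := fun _ _ _ _ => trivial
  have E1 : ∀ w : Fin 3 → ℝ,
      (l - 1) * V w (Pi.single 1 1)
        - (pd 1 u x * V w (Pi.single 2 1) + pd 2 v x * U w (Pi.single 1 1)) = 0 := by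
    intro w
    have hd : HasFDerivAt (fun y => (l - 1) * pd 1 v y - pd 1 u y * pd 2 v y)
        (((l - 1) • ((ContinuousLinearMap.apply ℝ ℝ (Pi.single 1 1)).comp V))
          - (pd 1 u x • ((ContinuousLinearMap.apply ℝ ℝ (Pi.single 2 1)).comp V)
             + pd 2 v x • ((ContinuousLinearMap.apply ℝ ℝ (Pi.single 1 1)).comp U))) x :=
      (((pd_hasFDerivAt hv 1 x).const_mul (l - 1)).sub
        ((pd_hasFDerivAt hu 1 x).mul (pd_hasFDerivAt hv 2 x)))
    have h0 : HasFDerivAt (fun y => (l - 1) * pd 1 v y - pd 1 u y * pd 2 v y)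
        (0 : (Fin 3 → ℝ) →L[ℝ] ℝ) x := by
      have : (fun y => (l - 1) * pd 1 v y - pd 1 u y * pd 2 v y) = fun _ => (0 : ℝ) :=
        funext h1
      rw [this]; exact hasFDerivAt_const 0 x
    have := hd.unique h0
    have := congrArg (fun (L : (Fin 3 → ℝ) →L[ℝ] ℝ) => L w) this
    simpa [smul_eq_mul, mul_comm] using this
  have E2 : ∀ w : Fin 3 → ℝ,
      l * V w (Pi.single 0 1)
        - (pd 0 u x * V w (Pi.single 2 1) + pd 2 v x * U w (Pi.single 0 1)) = 0 := by
    intro w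
    have hd : HasFDerivAt (fun y => l * pd 0 v y - pd 0 u y * pd 2 v y)
        ((l • ((ContinuousLinearMap.apply ℝ ℝ (Pi.single 0 1)).comp V))
          - (pd 0 u x • ((ContinuousLinearMap.apply ℝ ℝ (Pi.single 2 1)).comp V)
             + pd 2 v x • ((ContinuousLinearMap.apply ℝ ℝ (Pi.single 0 1)).comp U))) x :=
      (((pd_hasFDerivAt hv 0 x).const_mul l).sub
        ((pd_hasFDerivAt hu 0 x).mul (pd_hasFDerivAt hv 2 x)))
    have h0 : HasFDerivAt (fun y => l * pd 0 v y - pd 0 u y * pd 2 v y)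
        (0 : (Fin 3 → ℝ) →L[ℝ] ℝ) x := by
      have : (fun y => l * pd 0 v y - pd 0 u y * pd 2 v y) = fun _ => (0 : ℝ) :=
        funext h2
      rw [this]; exact hasFDerivAt_const 0 x
    have := hd.unique h0
    have := congrArg (fun (L : (Fin 3 → ℝ) →L[ℝ] ℝ) => L w) this
    simpa [smul_eq_mul, mul_comm] using this
  -- abbreviations
  have hsU : ∀ a b, U a b = U b a := sderiv_symm hu x
  have hsV : ∀ a b, V a b = V b a := sderiv_symm hv x
  have e10 := E1 (Pi.single 0 1)
  have e12 := E1 (Pi.single 2 1)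
  have e21 := E2 (Pi.single 1 1)
  have e22 := E2 (Pi.single 2 1)
  have sU2 := hsU (Pi.single 0 1) (Pi.single 2 1)
  have sU3 := hsU (Pi.single 1 1) (Pi.single 2 1)
  have sU1 := hsU (Pi.single 0 1) (Pi.single 1 1)
  have s1 := hsV (Pi.single 0 1) (Pi.single 1 1)
  have s2 := hsV (Pi.single 0 1) (Pi.single 2 1)
  have s3 := hsV (Pi.single 1 1) (Pi.single 2 1)
  have goal2 : pd 2 v x *
      (pd 0 (pd 1 u) x + pd 1 u x * pd 0 (pd 2 u) x - pd 0 u x * pd 1 (pd 2 u) x) = 0 := by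
    rw [pd_pd hu 1 0, pd_pd hu 2 0, pd_pd hu 2 1, ← hU]
    linear_combination (-l) * e10 + (l - 1) * e21 + (-(pd 1 u x)) * e22
      + (pd 0 u x) * e12 + (l * (l - 1)) * s1 + (-(l * pd 1 u x)) * s2
      + ((l - 1) * pd 0 u x) * s3 + (-((l - 1) * pd 2 v x)) * sU1
      + (pd 1 u x * pd 2 v x) * sU2 + (-(pd 0 u x * pd 2 v x)) * sU3
  exact (mul_eq_zero.mp goal2).resolve_left (hv3 x)
end
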